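/- For real β, X > 0, and h ∈ ℕ with h ≥ 1, writing S(X,h,β) = ∑_{1 ≤ n ≤ X} ε(n) ε(n+h) e(β n), one has S(X, 2h+1, β) = -S(X/2, h, 2β) - e(β) · S(X/2, h+1, 2β) + O(1), with an absolute implied constant. -/

import Mathlib

open Complex Finset

/-- `e(x) = exp(2πix)`. -/
noncomputable def e (x : ℝ) : ℂ := Complex.exp (2 * Real.pi * Complex.I * x)

/-- `ε(n) = (-1)^(s₂ n)` where `s₂` is the binary digit sum. -/
def eps (n : ℕ) : ℤ := (-1) ^ ((Nat.digits 2 n).sum)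

/-- `S(Y,h,β) = ∑_{1 ≤ n ≤ Y} ε(n) ε(n+h) e(βn)`. -/
noncomputable def S (Y : ℝ) (h : ℕ) (β : ℝ) : ℂ :=
  ∑ n ∈ Finset.Icc 1 ⌊Y⌋₊, (eps n : ℂ) * (eps (n + h) : ℂ) * e (β * n)

noncomputable def trm (β : ℝ) (h : ℕ) (n : ℕ) : ℂ :=
  (eps n : ℂ) * (eps (n + h) : ℂ) * e (β * n)

lemma norm_e (x : ℝ) : ‖e x‖ = 1 := by
  rw [e, Complex.norm_exp]
  simp

lemma norm_eps (n : ℕ) : ‖((eps n : ℤ) : ℂ)‖ = 1 := by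
  rw [eps]
  push_cast
  rw [norm_pow]
  simp

lemma norm_trm (β : ℝ) (h n : ℕ) : ‖trm β h n‖ = 1 := by
  rw [trm, norm_mul, norm_mul, norm_e, norm_eps, norm_eps]
  norm_num

lemma e_add (x y : ℝ) : e (x + y) = e x * e y := by
  rw [e, e, e, ← Complex.exp_add]
  congr 1
  push_cast
  ring

lemma eps_two_mul (m : ℕ) : eps (2 * m) = eps m := by
  rcases Nat.eq_zero_or_pos m with rfl | hm
  · rfl
  · rw [eps, eps, Nat.digits_def' (by norm_num : 1 < 2) (by omega)]
    have h1 : 2 * m % 2 = 0 := by omega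
    have h2 : 2 * m / 2 = m := by omega
    rw [h1, h2, List.sum_cons, Nat.zero_add]

lemma eps_two_mul_add_one (m : ℕ) : eps (2 * m + 1) = -eps m := by
  rw [eps, eps, Nat.digits_def' (by norm_num : 1 < 2) (by omega)]
  have h1 : (2 * m + 1) % 2 = 1 := by omega
  have h2 : (2 * m + 1) / 2 = m := by omega
  rw [h1, h2, List.sum_cons, pow_add]
  ring

lemma sum_range_two_mul (f : ℕ → ℂ) (M : ℕ) :
    ∑ n ∈ range (2 * M), f n = ∑ m ∈ range M, (f (2 * m) + f (2 * m + 1)) := by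
  induction M with
  | zero => simp
  | succ k ih =>
    have h : 2 * (k + 1) = (2 * k + 1) + 1 := by ring
    rw [h, Finset.sum_range_succ, Finset.sum_range_succ, Finset.sum_range_succ, ih]
    ring

lemma sum_Icc_one (F : ℕ → ℂ) (M : ℕ) :
    ∑ n ∈ Icc 1 M, F n = ∑ n ∈ range M, F n + F M - F 0 := by
  have h1 := Finset.sum_range_succ F M
  have h2 := Finset.sum_range_succ' F M
  have h3 : Icc 1 M = Ico 1 (M + 1) := by rw [Finset.Ico_add_one_right_eq_Icc]
  rw [h3, Finset.sum_Ico_eq_sum_range]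
  simp only [Nat.add_sub_cancel]
  have h : ∀ i ∈ range M, F (1 + i) = F (i + 1) := fun i _ => by rw [add_comm]
  rw [Finset.sum_congr rfl h]
  linear_combination h1 - h2

lemma floor_half (X : ℝ) : ⌊X / 2⌋₊ = ⌊X⌋₊ / 2 := by
  rw [show (2 : ℝ) = ((2 : ℕ) : ℝ) by norm_num, Nat.floor_div_natCast]

lemma S_eq (Y : ℝ) (h : ℕ) (β : ℝ) :
    S Y h β = ∑ n ∈ range ⌊Y⌋₊, trm β h n + trm β h ⌊Y⌋₊ - trm β h 0 := by
  rw [S]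
  exact sum_Icc_one (trm β h) ⌊Y⌋₊

lemma key_pointwise (β : ℝ) (h m : ℕ) :
    trm β (2 * h + 1) (2 * m) + trm β (2 * h + 1) (2 * m + 1)
      = -(trm (2 * β) h m) - e β * trm (2 * β) (h + 1) m := by
  have e1 : e (β * ((2 * m : ℕ) : ℝ)) = e ((2 * β) * (m : ℝ)) := by
    congr 1; push_cast; ring
  have e2 : e (β * ((2 * m + 1 : ℕ) : ℝ)) = e β * e ((2 * β) * (m : ℝ)) := by
    rw [← e_add]; congr 1; push_cast; ring
  have d1 : 2 * m + (2 * h + 1) = 2 * (m + h) + 1 := by ring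
  have d2 : 2 * m + 1 + (2 * h + 1) = 2 * (m + h + 1) := by ring
  rw [trm, trm, trm, trm, e1, e2, d1, d2, eps_two_mul, eps_two_mul,
    eps_two_mul_add_one, eps_two_mul_add_one]
  push_cast
  ring

theorem S_two_mul_h_add_one : ∃ C : ℝ, ∀ (β X : ℝ) (h : ℕ), 0 < X → 1 ≤ h →
    ‖S X (2 * h + 1) β -
      (-S (X / 2) h (2 * β) - e β * S (X / 2) (h + 1) (2 * β))‖ ≤ C := by
  use 8
  intro β X h _ _
  set N := ⌊X⌋₊ with hN
  set M := N / 2 with hMdef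
  have hM : ⌊X / 2⌋₊ = M := by rw [floor_half]
  have hsum2M : ∑ n ∈ range (2 * M), trm β (2 * h + 1) n
      = -(∑ m ∈ range M, trm (2 * β) h m) - e β * ∑ m ∈ range M, trm (2 * β) (h + 1) m := by
    rw [sum_range_two_mul]
    rw [Finset.sum_congr rfl (fun m _ => key_pointwise β h m)]
    rw [Finset.sum_sub_distrib, Finset.sum_neg_distrib, ← Finset.mul_sum]
  have hsplit : ∑ n ∈ range N, trm β (2 * h + 1) n
      = ∑ n ∈ range (2 * M), trm β (2 * h + 1) n + ∑ n ∈ Ico (2 * M) N, trm β (2 * h + 1) n := by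
    rw [Finset.range_eq_Ico, Finset.range_eq_Ico]
    exact (Finset.sum_Ico_consecutive (trm β (2 * h + 1)) (m := 0) (n := 2 * M) (k := N) (by omega) (by omega)).symm
  have hD : S X (2 * h + 1) β -
      (-S (X / 2) h (2 * β) - e β * S (X / 2) (h + 1) (2 * β))
      = (∑ n ∈ Ico (2 * M) N, trm β (2 * h + 1) n)
        + (trm β (2 * h + 1) N - trm β (2 * h + 1) 0)
        + ((trm (2 * β) h M - trm (2 * β) h 0)
          + e β * (trm (2 * β) (h + 1) M - trm (2 * β) (h + 1) 0)) := by
    rw [S_eq, S_eq, S_eq, hM, ← hN, hsplit, hsum2M]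
    ring
  rw [hD]
  have hR : ‖∑ n ∈ Ico (2 * M) N, trm β (2 * h + 1) n‖ ≤ 1 := by
    calc ‖∑ n ∈ Ico (2 * M) N, trm β (2 * h + 1) n‖
        ≤ ∑ n ∈ Ico (2 * M) N, ‖trm β (2 * h + 1) n‖ := norm_sum_le _ _
      _ = ((Ico (2 * M) N).card : ℝ) := by
          rw [Finset.sum_congr rfl (fun n _ => norm_trm β (2 * h + 1) n), Finset.sum_const,
            nsmul_eq_mul, mul_one]
      _ ≤ 1 := by
          rw [Nat.card_Ico]
          exact_mod_cast (by omega : N - 2 * M ≤ 1)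
  have b2 : ‖trm β (2 * h + 1) N - trm β (2 * h + 1) 0‖ ≤ 2 := by
    have := norm_sub_le (trm β (2 * h + 1) N) (trm β (2 * h + 1) 0)
    rw [norm_trm, norm_trm] at this
    linarith
  have b3 : ‖trm (2 * β) h M - trm (2 * β) h 0‖ ≤ 2 := by
    have := norm_sub_le (trm (2 * β) h M) (trm (2 * β) h 0)
    rw [norm_trm, norm_trm] at this
    linarith
  have b4 : ‖e β * (trm (2 * β) (h + 1) M - trm (2 * β) (h + 1) 0)‖ ≤ 2 := by
    rw [norm_mul, norm_e, one_mul]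
    have := norm_sub_le (trm (2 * β) (h + 1) M) (trm (2 * β) (h + 1) 0)
    rw [norm_trm, norm_trm] at this
    linarith
  have b5 : ‖(trm (2 * β) h M - trm (2 * β) h 0)
      + e β * (trm (2 * β) (h + 1) M - trm (2 * β) (h + 1) 0)‖ ≤ 4 := by
    have := norm_add_le (trm (2 * β) h M - trm (2 * β) h 0)
      (e β * (trm (2 * β) (h + 1) M - trm (2 * β) (h + 1) 0))
    linarith
  calc ‖_ + _ + _‖ ≤ _:= norm_add₃_le
    _ ≤ (8 : ℝ) := by linarith
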